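/- Let n ≥ 1, let U be a skew-Hermitian n×n complex matrix, let x be a nonzero real number, and for z ∈ ℂⁿ define E_z := { (k(U + (i x/2)·zz*)k*, x·k z) : k ∈ U(n) } ⊆ M_n(ℂ)×ℂⁿ. Then for all z, w ∈ ℂⁿ: E_z = E_w if and only if there exists h ∈ U(n) with h U h* = U and w = h z. (Key lemma in the proof of Proposition 1.) -/
import Mathlib


open Matrix Complex Finset

/-- The outer matrix `z w*` with `(l,j)` entry `z l * conj (w j)`. -/
noncomputable def outerMat {n : ℕ} (z w : Fin n → ℂ) : Matrix (Fin n) (Fin n) ℂ :=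
  Matrix.of fun l j => z l * (starRingEnd ℂ) (w j)

/-- The set `E_z = { (k (U + (i x/2) z z*) k*, x k z) : k ∈ U(n) }`. -/
noncomputable def Eset {n : ℕ} (U : Matrix (Fin n) (Fin n) ℂ) (x : ℝ) (z : Fin n → ℂ) :
    Set (Matrix (Fin n) (Fin n) ℂ × (Fin n → ℂ)) :=
  {p | ∃ k : Matrix.unitaryGroup (Fin n) ℂ,
    p = ((k : Matrix (Fin n) (Fin n) ℂ) *
          (U + ((Complex.I * (x : ℂ)) / 2) • outerMat z z) *
          star (k : Matrix (Fin n) (Fin n) ℂ),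
        (x : ℂ) • (k : Matrix (Fin n) (Fin n) ℂ).mulVec z)}

lemma outer_conj {n : ℕ} (M : Matrix (Fin n) (Fin n) ℂ) (z : Fin n → ℂ) :
    M * outerMat z z * star M = outerMat (M.mulVec z) (M.mulVec z) := by
  rw [Matrix.star_eq_conjTranspose]
  ext l j
  simp only [outerMat, Matrix.mul_apply, Matrix.conjTranspose_apply, Matrix.mulVec,
    dotProduct, Matrix.of_apply, map_sum, _root_.map_mul, Complex.star_def,
    Finset.sum_mul, Finset.mul_sum]
  exact Finset.sum_congr rfl fun p _ => Finset.sum_congr rfl fun q _ => by ring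

/-- Conjugation by a product. -/
lemma conj_conj {n : ℕ} (a b A : Matrix (Fin n) (Fin n) ℂ) :
    (a * b) * A * star (a * b) = a * (b * A * star b) * star a := by
  rw [Matrix.star_mul]
  noncomm_ring

lemma conj_add_key {n : ℕ} (U A : Matrix (Fin n) (Fin n) ℂ) (c : ℂ) (z : Fin n → ℂ)
    (h : Matrix (Fin n) (Fin n) ℂ)
    (hUh : h * U * star h = U) :
    h * (U + c • outerMat z z) * star h
      = U + c • outerMat (h.mulVec z) (h.mulVec z) := by
  rw [Matrix.mul_add, Matrix.add_mul, hUh, Matrix.mul_smul, Matrix.smul_mul, outer_conj]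

lemma Eset_subset {n : ℕ} (U : Matrix (Fin n) (Fin n) ℂ) (x : ℝ)
    (z : Fin n → ℂ) (h : Matrix.unitaryGroup (Fin n) ℂ)
    (hUh : (h : Matrix (Fin n) (Fin n) ℂ) * U * star (h : Matrix (Fin n) (Fin n) ℂ) = U) :
    Eset U x ((h : Matrix (Fin n) (Fin n) ℂ).mulVec z) ⊆ Eset U x z := by
  rintro p ⟨k, rfl⟩
  refine ⟨k * h, ?_⟩
  have hcoe : ((k * h : Matrix.unitaryGroup (Fin n) ℂ) : Matrix (Fin n) (Fin n) ℂ)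
      = (k : Matrix (Fin n) (Fin n) ℂ) * (h : Matrix (Fin n) (Fin n) ℂ) := rfl
  have key := conj_add_key U U ((Complex.I * (x : ℂ)) / 2) z
    (h : Matrix (Fin n) (Fin n) ℂ) hUh
  refine Prod.ext ?_ ?_
  · show _ = ((k * h : Matrix.unitaryGroup (Fin n) ℂ) : Matrix (Fin n) (Fin n) ℂ) *
      (U + ((Complex.I * (x : ℂ)) / 2) • outerMat z z) *
      star ((k * h : Matrix.unitaryGroup (Fin n) ℂ) : Matrix (Fin n) (Fin n) ℂ)
    rw [hcoe, conj_conj, key]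
  · show _ = (x : ℂ) • ((k * h : Matrix.unitaryGroup (Fin n) ℂ) :
      Matrix (Fin n) (Fin n) ℂ).mulVec z
    rw [hcoe, ← Matrix.mulVec_mulVec]

/-- key lemma of Proposition 1: `E_z = E_w` iff `w = h z` for some
`h ∈ U(n)` stabilizing `U`. -/
theorem Eset_eq_iff {n : ℕ} (hn : 1 ≤ n)
    (U : Matrix (Fin n) (Fin n) ℂ) (hU : Uᴴ = -U) (x : ℝ) (hx : x ≠ 0)
    (z w : Fin n → ℂ) :
    Eset U x z = Eset U x w ↔
      ∃ h : Matrix.unitaryGroup (Fin n) ℂ,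
        (h : Matrix (Fin n) (Fin n) ℂ) * U * star (h : Matrix (Fin n) (Fin n) ℂ) = U ∧
        w = (h : Matrix (Fin n) (Fin n) ℂ).mulVec z := by
  have hxC : (x : ℂ) ≠ 0 := by exact_mod_cast hx
  constructor
  · intro heq
    have hmem : ((U + ((Complex.I * (x : ℂ)) / 2) • outerMat z z), (x : ℂ) • z)
        ∈ Eset U x z := by
      refine ⟨1, ?_⟩
      simp [Matrix.one_mulVec]
    rw [heq] at hmem
    obtain ⟨h, hp⟩ := hmem
    rw [Prod.mk.injEq] at hp
    obtain ⟨hmat, hvec⟩ := hp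
    have hz : z = (h : Matrix (Fin n) (Fin n) ℂ).mulVec w :=
      smul_right_injective (Fin n → ℂ) hxC hvec
    have hstar : star (h : Matrix (Fin n) (Fin n) ℂ) * (h : Matrix (Fin n) (Fin n) ℂ) = 1 :=
      h.prop.1
    have hUfix : (h : Matrix (Fin n) (Fin n) ℂ) * U * star (h : Matrix (Fin n) (Fin n) ℂ) = U := by
      have key : (h : Matrix (Fin n) (Fin n) ℂ) *
          (U + ((Complex.I * (x : ℂ)) / 2) • outerMat w w) *
          star (h : Matrix (Fin n) (Fin n) ℂ)
          = (h : Matrix (Fin n) (Fin n) ℂ) * U * star (h : Matrix (Fin n) (Fin n) ℂ)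
            + ((Complex.I * (x : ℂ)) / 2) • outerMat z z := by
        rw [Matrix.mul_add, Matrix.add_mul, Matrix.mul_smul, Matrix.smul_mul, outer_conj, ← hz]
      rw [key] at hmat
      exact (add_right_cancel hmat).symm
    refine ⟨star h, ?_, ?_⟩
    · show star (h : Matrix (Fin n) (Fin n) ℂ) * U *
        star (star (h : Matrix (Fin n) (Fin n) ℂ)) = U
      rw [star_star]
      calc star (h : Matrix (Fin n) (Fin n) ℂ) * U * (h : Matrix (Fin n) (Fin n) ℂ)
          = star (h : Matrix (Fin n) (Fin n) ℂ) *
              ((h : Matrix (Fin n) (Fin n) ℂ) * U * star (h : Matrix (Fin n) (Fin n) ℂ)) *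
              (h : Matrix (Fin n) (Fin n) ℂ) := by rw [hUfix]
        _ = (star (h : Matrix (Fin n) (Fin n) ℂ) * (h : Matrix (Fin n) (Fin n) ℂ)) * U *
              (star (h : Matrix (Fin n) (Fin n) ℂ) * (h : Matrix (Fin n) (Fin n) ℂ)) := by
              noncomm_ring
        _ = U := by rw [hstar, Matrix.one_mul, Matrix.mul_one]
    · show w = (star (h : Matrix (Fin n) (Fin n) ℂ)).mulVec z
      rw [hz, Matrix.mulVec_mulVec, hstar, Matrix.one_mulVec]
  · rintro ⟨h, hUh, rfl⟩
    apply Set.Subset.antisymm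
    · have h1 : star (h : Matrix (Fin n) (Fin n) ℂ) * (h : Matrix (Fin n) (Fin n) ℂ) = 1 :=
        h.prop.1
      have hUh' : ((star h : Matrix.unitaryGroup (Fin n) ℂ) : Matrix (Fin n) (Fin n) ℂ) * U *
          star ((star h : Matrix.unitaryGroup (Fin n) ℂ) : Matrix (Fin n) (Fin n) ℂ) = U := by
        show star (h : Matrix (Fin n) (Fin n) ℂ) * U *
          star (star (h : Matrix (Fin n) (Fin n) ℂ)) = U
        rw [star_star]
        calc star (h : Matrix (Fin n) (Fin n) ℂ) * U * (h : Matrix (Fin n) (Fin n) ℂ)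
            = star (h : Matrix (Fin n) (Fin n) ℂ) *
                ((h : Matrix (Fin n) (Fin n) ℂ) * U * star (h : Matrix (Fin n) (Fin n) ℂ)) *
                (h : Matrix (Fin n) (Fin n) ℂ) := by rw [hUh]
          _ = (star (h : Matrix (Fin n) (Fin n) ℂ) * (h : Matrix (Fin n) (Fin n) ℂ)) * U *
                (star (h : Matrix (Fin n) (Fin n) ℂ) * (h : Matrix (Fin n) (Fin n) ℂ)) := by
                noncomm_ring
          _ = U := by rw [h1, Matrix.one_mul, Matrix.mul_one]
      have hzw : z = ((star h : Matrix.unitaryGroup (Fin n) ℂ) : Matrix (Fin n) (Fin n) ℂ).mulVec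
          ((h : Matrix (Fin n) (Fin n) ℂ).mulVec z) := by
        show z = (star (h : Matrix (Fin n) (Fin n) ℂ)).mulVec
          ((h : Matrix (Fin n) (Fin n) ℂ).mulVec z)
        rw [Matrix.mulVec_mulVec, h1, Matrix.one_mulVec]
      calc Eset U x z
          = Eset U x (((star h : Matrix.unitaryGroup (Fin n) ℂ) :
              Matrix (Fin n) (Fin n) ℂ).mulVec ((h : Matrix (Fin n) (Fin n) ℂ).mulVec z)) := by
            rw [← hzw]
        _ ⊆ Eset U x ((h : Matrix (Fin n) (Fin n) ℂ).mulVec z) :=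
            Eset_subset U x _ (star h) hUh'
    · exact Eset_subset U x z h hUh
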